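/- (Feasibility of the fractional T-join solution in Case A1.) Let x be a feasible solution of the path-variant Held-Karp relaxation with respect to s and t, let γ ∈ (0,1), let F be a spanning tree of the complete graph on V, and let S ⊆ F be a set of tree edges each satisfying x_e ≥ 1 − γ. Let T be the wrong-parity set of F. Define y : E → ℝ by y_e = 1 if e ∈ F \ S, y_e = x_e/(2(1 − γ)) if e ∈ S, and y_e = x_e if e ∉ F. Then for every nonempty proper subset U ⊊ V with |U ∩ T| odd, y(δ(U)) ≥ 1. -/

import Mathlib

open Finset

namespace TSPPath

noncomputable section
open scoped Classical

/-- Edge set of the complete graph on `Fin n`: all unordered pairs of distinct vertices. -/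
def Edges (n : ℕ) : Finset (Sym2 (Fin n)) := Finset.univ.filter (fun e => ¬ e.IsDiag)

/-- `cutSet n S` is `δ(S)`: the edges with exactly one endpoint in `S`. -/
def cutSet (n : ℕ) (S : Finset (Fin n)) : Finset (Sym2 (Fin n)) :=
  (Edges n).filter (fun e => ∃ u v : Fin n, e = s(u, v) ∧ u ∈ S ∧ v ∉ S)

/-- `inSet n S` is `E(S)`: the edges with both endpoints in `S`. -/
def inSet (n : ℕ) (S : Finset (Fin n)) : Finset (Sym2 (Fin n)) :=
  (Edges n).filter (fun e => ∀ v ∈ e, v ∈ S)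

/-- Degree of a vertex in an edge set. -/
def deg (n : ℕ) (H : Finset (Sym2 (Fin n))) (v : Fin n) : ℕ :=
  (H.filter (fun e => v ∈ e)).card

/-- Degree of a vertex in an edge multiset (counting multiplicity). -/
def mdeg (n : ℕ) (L : Multiset (Sym2 (Fin n))) (v : Fin n) : ℕ :=
  (L.filter (fun e => v ∈ e)).card

/-- Feasibility for the path-variant Held–Karp relaxation with endpoints `s, t`. -/
def HKPathFeasible (n : ℕ) (s t : Fin n) (x : Sym2 (Fin n) → ℝ) : Prop :=
  (∀ e, 0 ≤ x e) ∧
  (∑ e ∈ cutSet n {s}, x e = 1) ∧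
  (∑ e ∈ cutSet n {t}, x e = 1) ∧
  (∀ v : Fin n, v ≠ s → v ≠ t → ∑ e ∈ cutSet n {v}, x e = 2) ∧
  (∀ S : Finset (Fin n), S.Nonempty → S ≠ Finset.univ →
      ((s ∈ S ∧ t ∉ S) ∨ (s ∉ S ∧ t ∈ S)) → 1 ≤ ∑ e ∈ cutSet n S, x e) ∧
  (∀ S : Finset (Fin n), S.Nonempty → S ≠ Finset.univ →
      ¬((s ∈ S ∧ t ∉ S) ∨ (s ∉ S ∧ t ∈ S)) → 2 ≤ ∑ e ∈ cutSet n S, x e)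

/-- `c` is a metric: nonnegative, symmetric, vanishing on the diagonal, triangle inequality. -/
def IsMetric (n : ℕ) (c : Fin n → Fin n → ℝ) : Prop :=
  (∀ u v, 0 ≤ c u v) ∧ (∀ u v, c u v = c v u) ∧ (∀ u, c u u = 0) ∧
  (∀ u v w, c u w ≤ c u v + c v w)

/-- Cost of an unordered edge (defined by symmetrization, which agrees with `c u v`
whenever `c` is symmetric). -/
def ecost (n : ℕ) (c : Fin n → Fin n → ℝ) (e : Sym2 (Fin n)) : ℝ :=
  Sym2.lift ⟨fun u v => (c u v + c v u) / 2, by intro u v; ring⟩ e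

/-- `c(x) = ∑_{e ∈ E} x_e c(e)`. -/
def xcost (n : ℕ) (c : Fin n → Fin n → ℝ) (x : Sym2 (Fin n) → ℝ) : ℝ :=
  ∑ e ∈ Edges n, x e * ecost n c e

/-- `c(F) = ∑_{e ∈ F} c(e)` for an edge set `F`. -/
def fcost (n : ℕ) (c : Fin n → Fin n → ℝ) (F : Finset (Sym2 (Fin n))) : ℝ :=
  ∑ e ∈ F, ecost n c e

/-- `H` is (the edge set of) a spanning tree of the complete graph on `Fin n`. -/
def IsSpanningTree (n : ℕ) (H : Finset (Sym2 (Fin n))) : Prop :=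
  H ⊆ Edges n ∧ (SimpleGraph.fromEdgeSet (H : Set (Sym2 (Fin n)))).Connected ∧
    H.card = n - 1

/-- The wrong-parity set of an edge set `H`: internal vertices of odd degree
together with the endpoints of even degree. -/
def wrongParity (n : ℕ) (s t : Fin n) (H : Finset (Sym2 (Fin n))) : Finset (Fin n) :=
  Finset.univ.filter (fun v =>
    if v = s ∨ v = t then Even (deg n H v) else Odd (deg n H v))

/-- `M` is a perfect matching on the vertex set `T`: vertex-disjoint edges covering
exactly the vertices of `T`. -/
def IsPerfectMatchingOn (n : ℕ) (T : Finset (Fin n)) (M : Finset (Sym2 (Fin n))) : Prop :=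
  M ⊆ Edges n ∧ (∀ v ∈ T, deg n M v = 1) ∧ (∀ v : Fin n, v ∉ T → deg n M v = 0)

/-- `J` is a `T`-join: exactly the vertices of `T` have odd degree in `J`. -/
def IsTJoin (n : ℕ) (T : Finset (Fin n)) (J : Finset (Sym2 (Fin n))) : Prop :=
  J ⊆ Edges n ∧ ∀ v : Fin n, Odd (deg n J v) ↔ v ∈ T

/-- There is a Hamiltonian path from `s` to `t` in the complete graph on `Fin n`
of cost (w.r.t. the metric `c`) at most `B`. -/
def ExistsHamPath (n : ℕ) (s t : Fin n) (c : Fin n → Fin n → ℝ) (B : ℝ) : Prop :=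
  ∃ p : (⊤ : SimpleGraph (Fin n)).Walk s t,
    p.IsHamiltonian ∧ (p.edges.map (ecost n c)).sum ≤ B

/-- Connectivity of the multigraph `(V, L)` (equivalently, of its support graph,
which must span all of `Fin n`). -/
def MConnected (n : ℕ) (L : Multiset (Sym2 (Fin n))) : Prop :=
  (SimpleGraph.fromEdgeSet {e | e ∈ L}).Connected

/-- The multiset of edges traversed by the walk given by a vertex list `w`. -/
def walkEdges (n : ℕ) (w : List (Fin n)) : Multiset (Sym2 (Fin n)) :=
  ((w.zip w.tail).map (Function.uncurry Sym2.mk) : List (Sym2 (Fin n)))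

/-- `w` is an Eulerian trail from `s` to `t` of the edge multiset `L`: a walk from `s`
to `t` whose multiset of traversed edges is exactly `L` (with multiplicity). -/
def IsEulerianTrail (n : ℕ) (L : Multiset (Sym2 (Fin n))) (s t : Fin n)
    (w : List (Fin n)) : Prop :=
  w.head? = some s ∧ w.getLast? = some t ∧ walkEdges n w = L

lemma mem_Edges_mk {n : ℕ} {a b : Fin n} : s(a, b) ∈ Edges n ↔ a ≠ b := by
  simp [Edges]

lemma mem_cutSet_mk {n : ℕ} {U : Finset (Fin n)} {a b : Fin n} :
    s(a, b) ∈ cutSet n U ↔ a ≠ b ∧ ((a ∈ U ∧ b ∉ U) ∨ (b ∈ U ∧ a ∉ U)) := by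
  unfold cutSet
  rw [Finset.mem_filter, mem_Edges_mk]
  constructor
  · rintro ⟨hab, u, v, huv, hu, hv⟩
    rw [Sym2.eq_iff] at huv
    rcases huv with ⟨rfl, rfl⟩ | ⟨rfl, rfl⟩
    · exact ⟨hab, Or.inl ⟨hu, hv⟩⟩
    · exact ⟨hab.symm.symm, Or.inr ⟨hu, hv⟩⟩
  · rintro ⟨hab, ⟨ha, hb⟩ | ⟨hb, ha⟩⟩
    · exact ⟨hab, a, b, rfl, ha, hb⟩
    · exact ⟨hab, b, a, Sym2.eq_swap, hb, ha⟩

lemma natCast_zmod2_even {k : ℕ} (h : Even k) : (k : ZMod 2) = 0 := by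
  obtain ⟨m, rfl⟩ := h
  push_cast
  rw [← two_mul]
  simp [show (2 : ZMod 2) = 0 by decide]

lemma natCast_zmod2_odd {k : ℕ} (h : Odd k) : (k : ZMod 2) = 1 := by
  obtain ⟨m, rfl⟩ := h
  push_cast
  simp [show (2 : ZMod 2) = 0 by decide]

lemma handshake_mod2 {n : ℕ} (H : Finset (Sym2 (Fin n))) (hH : H ⊆ Edges n)
    (U : Finset (Fin n)) :
    ((∑ v ∈ U, deg n H v : ℕ) : ZMod 2) = ((H ∩ cutSet n U).card : ZMod 2) := by
  have h1 : ∑ v ∈ U, deg n H v = ∑ e ∈ H, (U.filter (fun v => v ∈ e)).card := by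
    unfold deg
    simp_rw [Finset.card_filter]
    rw [Finset.sum_comm]
  rw [h1]
  push_cast
  have h2 : ∀ e ∈ H, ((U.filter (fun v => v ∈ e)).card : ZMod 2) =
      if e ∈ cutSet n U then 1 else 0 := by
    intro e he
    induction e using Sym2.ind with
    | _ a b =>
      have hab : a ≠ b := mem_Edges_mk.mp (hH he)
      have hfil : U.filter (fun v => v ∈ s(a, b)) =
          (if a ∈ U then {a} else ∅) ∪ (if b ∈ U then {b} else ∅) := by
        simp_rw [Sym2.mem_iff]
        rw [Finset.filter_or, Finset.filter_eq', Finset.filter_eq']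
      rw [hfil]
      by_cases ha : a ∈ U <;> by_cases hb : b ∈ U <;>
        simp [ha, hb, mem_cutSet_mk, hab, Finset.card_union_of_disjoint,
          Finset.disjoint_singleton, Ne.symm] <;>
        try decide
  rw [Finset.sum_congr rfl h2, Finset.sum_boole, Finset.filter_mem_eq_inter]

lemma walk_crossing {V : Type*} {G : SimpleGraph V} {u v : V} (p : G.Walk u v)
    (U : Finset V) : u ∈ U → v ∉ U → ∃ a b, G.Adj a b ∧ a ∈ U ∧ b ∉ U := by
  induction p with
  | nil => intro hu hv; exact absurd hu hv
  | @cons a b c h q ih =>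
    intro hu hv
    by_cases hb : b ∈ U
    · exact ih hb hv
    · exact ⟨a, b, h, hu, hb⟩

lemma exists_crossing_edge {n : ℕ} (F : Finset (Sym2 (Fin n))) (hF : IsSpanningTree n F)
    (U : Finset (Fin n)) (hne : U.Nonempty) (hU : U ≠ Finset.univ) :
    (F ∩ cutSet n U).Nonempty := by
  obtain ⟨u, hu⟩ := hne
  have : ∃ v, v ∉ U := by
    by_contra h
    push_neg at h
    exact hU (Finset.eq_univ_iff_forall.mpr h)
  obtain ⟨v, hv⟩ := this
  obtain ⟨p⟩ := hF.2.1.preconnected u v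
  obtain ⟨a, b, hadj, ha, hb⟩ := walk_crossing p U hu hv
  rw [SimpleGraph.fromEdgeSet_adj] at hadj
  refine ⟨s(a, b), Finset.mem_inter.mpr ⟨?_, mem_cutSet_mk.mpr ⟨hadj.2, Or.inl ⟨ha, hb⟩⟩⟩⟩
  exact_mod_cast hadj.1

lemma x_le_two {n : ℕ} {s t : Fin n} {x : Sym2 (Fin n) → ℝ}
    (hx : HKPathFeasible n s t x) {e : Sym2 (Fin n)} (he : e ∈ Edges n) : x e ≤ 2 := by
  induction e using Sym2.ind with
  | _ a b =>
    have hab : a ≠ b := mem_Edges_mk.mp he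
    have hmem : s(a, b) ∈ cutSet n {a} :=
      mem_cutSet_mk.mpr ⟨hab, Or.inl ⟨Finset.mem_singleton_self a, by
        simp [Finset.mem_singleton]; exact hab.symm⟩⟩
    have hle : x s(a, b) ≤ ∑ e ∈ cutSet n {a}, x e :=
      Finset.single_le_sum (fun e _ => hx.1 e) hmem
    by_cases has : a = s
    · subst has; linarith [hx.2.1]
    · by_cases hat : a = t
      · subst hat; linarith [hx.2.2.1]
      · linarith [hx.2.2.2.1 a has hat]

/-- (Feasibility of the fractional `T`-join solution in Case A1.)
With `y` equal to `1` on `F \ S`, `x_e/(2(1−γ))` on `S`, and `x_e` elsewhere, every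
cut `U` with `|U ∩ T|` odd satisfies `y(δ(U)) ≥ 1`, where `T` is the wrong-parity set
of the spanning tree `F`. -/
theorem Tjoin_LP_feasibility (n : ℕ) (hn : 2 ≤ n) (s t : Fin n) (hst : s ≠ t)
    (x : Sym2 (Fin n) → ℝ) (hx : HKPathFeasible n s t x)
    (γ : ℝ) (hγ0 : 0 < γ) (hγ1 : γ < 1)
    (F : Finset (Sym2 (Fin n))) (hF : IsSpanningTree n F)
    (S : Finset (Sym2 (Fin n))) (hSF : S ⊆ F) (hS : ∀ e ∈ S, 1 - γ ≤ x e)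
    (y : Sym2 (Fin n) → ℝ)
    (hy : ∀ e ∈ Edges n,
      y e = if e ∈ S then x e / (2 * (1 - γ)) else if e ∈ F then 1 else x e) :
    ∀ U : Finset (Fin n), U.Nonempty → U ≠ Finset.univ →
      Odd (U ∩ wrongParity n s t F).card → 1 ≤ ∑ e ∈ cutSet n U, y e := by
  intro U hne hU hodd
  have h1γ : (0:ℝ) < 1 - γ := by linarith
  have h2γ : (0:ℝ) < 2 * (1 - γ) := by linarith
  have hFE : F ⊆ Edges n := hF.1
  have hcutE : cutSet n U ⊆ Edges n := Finset.filter_subset _ _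
  have hy0 : ∀ e ∈ Edges n, 0 ≤ y e := by
    intro e he
    rw [hy e he]
    split_ifs with h1 h2
    · exact div_nonneg (hx.1 e) (le_of_lt h2γ)
    · norm_num
    · exact hx.1 e
  have hyx : ∀ e ∈ Edges n, x e / 2 ≤ y e := by
    intro e he
    rw [hy e he]
    split_ifs with h1 h2
    · rw [div_le_div_iff₀ (by norm_num) h2γ]
      nlinarith [hx.1 e]
    · linarith [x_le_two hx he]
    · linarith [hx.1 e]
  have hyF : ∀ e ∈ F, (1:ℝ)/2 ≤ y e := by
    intro e heF
    rw [hy e (hFE heF)]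
    split_ifs with h1 h2
    · rw [div_le_div_iff₀ (by norm_num) h2γ]
      linarith [hS e h1]
    · norm_num
  by_cases hsep : (s ∈ U ∧ t ∉ U) ∨ (s ∉ U ∧ t ∈ U)
  · -- separating cut: at least two tree edges cross, each with y ≥ 1/2
    have hpar : ((F ∩ cutSet n U).card : ZMod 2) = 0 := by
      rw [← handshake_mod2 F hFE U]
      push_cast
      have hdeg : ∀ v ∈ U, ((deg n F v : ZMod 2)) =
          (if v ∈ wrongParity n s t F then 1 else 0) +
          (if v = s ∨ v = t then 1 else 0) := by
        intro v _
        have hvT : v ∈ wrongParity n s t F ↔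
            (if v = s ∨ v = t then Even (deg n F v) else Odd (deg n F v)) := by
          simp [wrongParity]
        by_cases hst' : v = s ∨ v = t
        · rw [if_pos hst'] at hvT
          by_cases hE : Even (deg n F v)
          · rw [natCast_zmod2_even hE, if_pos (hvT.mpr hE), if_pos hst']
            decide
          · rw [natCast_zmod2_odd (Nat.not_even_iff_odd.mp hE),
              if_neg (fun h => hE (hvT.mp h)), if_pos hst']
            decide
        · rw [if_neg hst'] at hvT
          by_cases hE : Even (deg n F v)
          · rw [natCast_zmod2_even hE,
              if_neg (fun h => (Nat.not_even_iff_odd.mpr (hvT.mp h)) hE), if_neg hst']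
            decide
          · rw [natCast_zmod2_odd (Nat.not_even_iff_odd.mp hE),
              if_pos (hvT.mpr (Nat.not_even_iff_odd.mp hE)), if_neg hst']
            decide
      rw [Finset.sum_congr rfl hdeg, Finset.sum_add_distrib, Finset.sum_boole,
        Finset.sum_boole, Finset.filter_mem_eq_inter]
      have hcard1 : ((U ∩ wrongParity n s t F).card : ZMod 2) = 1 :=
        natCast_zmod2_odd hodd
      have hcard2 : (U.filter (fun v => v = s ∨ v = t)) = if s ∈ U then {s} else {t} := by
        rcases hsep with ⟨hs', ht'⟩ | ⟨hs', ht'⟩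
        · rw [if_pos hs']
          ext v
          simp only [Finset.mem_filter, Finset.mem_singleton]
          constructor
          · rintro ⟨hvU, rfl | rfl⟩
            · rfl
            · exact absurd hvU ht'
          · rintro rfl; exact ⟨hs', Or.inl rfl⟩
        · rw [if_neg hs']
          ext v
          simp only [Finset.mem_filter, Finset.mem_singleton]
          constructor
          · rintro ⟨hvU, rfl | rfl⟩
            · exact absurd hvU hs'
            · rfl
          · rintro rfl; exact ⟨ht', Or.inr rfl⟩
      rw [hcard1, hcard2]
      split_ifs <;> simp <;> decide
    have hdvd : 2 ∣ (F ∩ cutSet n U).card := by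
      rwa [ZMod.natCast_eq_zero_iff] at hpar
    have hpos : 0 < (F ∩ cutSet n U).card :=
      Finset.card_pos.mpr (exists_crossing_edge F hF U hne hU)
    have h2card : 2 ≤ (F ∩ cutSet n U).card := Nat.le_of_dvd hpos hdvd
    have hsum1 : ((F ∩ cutSet n U).card : ℝ) * (1/2) ≤ ∑ e ∈ F ∩ cutSet n U, y e := by
      have := Finset.card_nsmul_le_sum (F ∩ cutSet n U) y (1/2)
        (fun e he => hyF e (Finset.mem_inter.mp he).1)
      rwa [nsmul_eq_mul] at this
    have hsum2 : ∑ e ∈ F ∩ cutSet n U, y e ≤ ∑ e ∈ cutSet n U, y e :=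
      Finset.sum_le_sum_of_subset_of_nonneg Finset.inter_subset_right
        (fun e he _ => hy0 e (hcutE he))
    have : (2:ℝ) ≤ ((F ∩ cutSet n U).card : ℝ) := by exact_mod_cast h2card
    nlinarith
  · -- non-separating cut: x(δ(U)) ≥ 2 and y ≥ x/2
    have h2 : 2 ≤ ∑ e ∈ cutSet n U, x e := hx.2.2.2.2.2 U hne hU hsep
    have h3 : ∑ e ∈ cutSet n U, x e / 2 ≤ ∑ e ∈ cutSet n U, y e :=
      Finset.sum_le_sum (fun e he => hyx e (hcutE he))
    rw [← Finset.sum_div] at h3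
    linarith

end
end TSPPath
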